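/- arXiv:1611.02026 — 3 statements merged into one kernel-verified Lean document; each statement's English description precedes it below -/
import Mathlib

section
/- Let (ℬ, ‖·‖_L) be the Banach space of measurable functions φ on D̄ with ‖φ‖_L = sup |φ(t,s,x,y)|/(1+‖s‖₁) < ∞. Suppose an operator A on ℬ satisfies |Aφ₁ − Aφ₂|(t,s,x,y) ≤ ∫₀^{T−t} w(v; t,x,y) · ‖φ₁−φ₂‖_L · (1 + ‖s‖₁ e^{r v}) e^{−r v} dv where r ≥ 0, w(·;t,x,y) ≥ 0, and sup_{(t,x,y)} ∫₀^{T−t} w(v;t,x,y) dv < 1. Then A is a contraction on ℬ and hence has a unique fixed point in ℬ. -/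
open MeasureTheory

/-- Points of the closed domain `D̄ = [0,T] × [0,∞)ⁿ × 𝒳^{n+1} × [0,T]^{n+1}`. -/
def Dbar (𝒳 : Type*) (n : ℕ) (T : ℝ) : Type _ :=
  {q : ℝ × (Fin n → ℝ) × (Fin (n+1) → 𝒳) × (Fin (n+1) → ℝ) //
    q.1 ∈ Set.Icc 0 T ∧ (∀ l, 0 ≤ q.2.1 l) ∧ ∀ l, q.2.2.2 l ∈ Set.Icc 0 T}

instance (𝒳 : Type*) [MeasurableSpace 𝒳] (n : ℕ) (T : ℝ) : MeasurableSpace (Dbar 𝒳 n T) :=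
  Subtype.instMeasurableSpace

/-- The weighted sup-norm `‖φ‖_L = sup |φ(t,s,x,y)|/(1+‖s‖₁)` (valued in `ℝ≥0∞`). -/
noncomputable def normL {𝒳 : Type*} {n : ℕ} {T : ℝ} (φ : Dbar 𝒳 n T → ℝ) : ENNReal :=
  ⨆ p : Dbar 𝒳 n T, ENNReal.ofReal (|φ p| / (1 + ∑ l, p.val.2.1 l))

/-- The Banach space `ℬ` of measurable functions on `D̄` with finite weighted sup-norm. -/
def spaceB (𝒳 : Type*) [MeasurableSpace 𝒳] (n : ℕ) (T : ℝ) : Set (Dbar 𝒳 n T → ℝ) :=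
  {φ | Measurable φ ∧ normL φ < ⊤}

section Aux
variable {𝒳 : Type*} {n : ℕ} {T : ℝ}

lemma aux_Spos (p : Dbar 𝒳 n T) : 0 < 1 + ∑ l, p.val.2.1 l :=
  add_pos_of_pos_of_nonneg one_pos (Finset.sum_nonneg fun l _ => p.property.2.1 l)

lemma aux_normL_le {f : Dbar 𝒳 n T → ℝ} {C : ℝ}
    (h : ∀ p, |f p| ≤ C * (1 + ∑ l, p.val.2.1 l)) : normL f ≤ ENNReal.ofReal C := by
  refine iSup_le fun p => ?_
  exact ENNReal.ofReal_le_ofReal ((div_le_iff₀ (aux_Spos p)).mpr (h p))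

lemma aux_abs_le {f : Dbar 𝒳 n T → ℝ} (hf : normL f ≠ ⊤) (p : Dbar 𝒳 n T) :
    |f p| ≤ (normL f).toReal * (1 + ∑ l, p.val.2.1 l) := by
  have h1 : ENNReal.ofReal (|f p| / (1 + ∑ l, p.val.2.1 l)) ≤ normL f :=
    le_iSup (fun p : Dbar 𝒳 n T => ENNReal.ofReal (|f p| / (1 + ∑ l, p.val.2.1 l))) p
  have h2 := (ENNReal.ofReal_le_iff_le_toReal hf).mp h1
  rwa [div_le_iff₀ (aux_Spos p)] at h2

lemma aux_normL_sub_le (f g : Dbar 𝒳 n T → ℝ) :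
    normL (fun q => f q - g q) ≤ normL f + normL g := by
  refine iSup_le fun p => ?_
  have h1 : |f p - g p| / (1 + ∑ l, p.val.2.1 l)
      ≤ |f p| / (1 + ∑ l, p.val.2.1 l) + |g p| / (1 + ∑ l, p.val.2.1 l) := by
    rw [← add_div]
    gcongr
    · exact (aux_Spos p).le
    · exact abs_sub (f p) (g p)
  calc ENNReal.ofReal (|f p - g p| / (1 + ∑ l, p.val.2.1 l))
      ≤ ENNReal.ofReal (|f p| / (1 + ∑ l, p.val.2.1 l) + |g p| / (1 + ∑ l, p.val.2.1 l)) :=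
        ENNReal.ofReal_le_ofReal h1
    _ ≤ ENNReal.ofReal (|f p| / (1 + ∑ l, p.val.2.1 l))
        + ENNReal.ofReal (|g p| / (1 + ∑ l, p.val.2.1 l)) := ENNReal.ofReal_add_le
    _ ≤ normL f + normL g := add_le_add
        (le_iSup (fun p : Dbar 𝒳 n T => ENNReal.ofReal (|f p| / (1 + ∑ l, p.val.2.1 l))) p)
        (le_iSup (fun p : Dbar 𝒳 n T => ENNReal.ofReal (|g p| / (1 + ∑ l, p.val.2.1 l))) p)

lemma aux_normL_eq_zero {f : Dbar 𝒳 n T → ℝ} (h : normL f = 0) (p : Dbar 𝒳 n T) : f p = 0 := by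
  have h1 : ENNReal.ofReal (|f p| / (1 + ∑ l, p.val.2.1 l)) ≤ 0 := h ▸ le_iSup (fun p : Dbar 𝒳 n T => ENNReal.ofReal (|f p| / (1 + ∑ l, p.val.2.1 l))) p
  have h2 : |f p| / (1 + ∑ l, p.val.2.1 l) ≤ 0 := by
    simpa [ENNReal.ofReal_eq_zero] using le_antisymm h1 zero_le
  have h3 : |f p| ≤ 0 := by
    have := (div_le_iff₀ (aux_Spos p)).mp h2
    simpa using this
  exact abs_eq_zero.mp (le_antisymm h3 (abs_nonneg _))

end Aux


set_option maxHeartbeats 2000000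

/-- If an operator `A` on `ℬ` satisfies
`|Aφ₁ − Aφ₂|(t,s,x,y) ≤ ∫₀^{T−t} w(v;t,x,y) ‖φ₁−φ₂‖_L (1+‖s‖₁ e^{rv}) e^{−rv} dv`
with `r ≥ 0`, `w ≥ 0` and `sup ∫₀^{T−t} w < 1`, then `A` is a contraction on `ℬ` and has a
unique fixed point in `ℬ`. -/
theorem stmt_9 {𝒳 : Type*} [MeasurableSpace 𝒳] (n : ℕ) (T r : ℝ) (hT : 0 < T) (hr : 0 ≤ r)
    (A : (Dbar 𝒳 n T → ℝ) → (Dbar 𝒳 n T → ℝ))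
    (hA : ∀ φ ∈ spaceB 𝒳 n T, A φ ∈ spaceB 𝒳 n T)
    (w : ℝ → Dbar 𝒳 n T → ℝ)
    (hw : ∀ v p, 0 ≤ w v p)
    (hwint : ∀ p : Dbar 𝒳 n T, IntervalIntegrable (fun v => w v p) volume 0 (T - p.val.1))
    (J : ℝ) (hJ : J < 1)
    (hwJ : ∀ p : Dbar 𝒳 n T, (∫ v in (0:ℝ)..(T - p.val.1), w v p) ≤ J)
    (hbound : ∀ φ₁ ∈ spaceB 𝒳 n T, ∀ φ₂ ∈ spaceB 𝒳 n T, ∀ p : Dbar 𝒳 n T,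
      |A φ₁ p - A φ₂ p|
        ≤ ∫ v in (0:ℝ)..(T - p.val.1),
            w v p * (normL (fun q => φ₁ q - φ₂ q)).toReal
              * (1 + (∑ l, p.val.2.1 l) * Real.exp (r * v)) * Real.exp (-(r * v))) :
    (∀ φ₁ ∈ spaceB 𝒳 n T, ∀ φ₂ ∈ spaceB 𝒳 n T,
        normL (fun q => A φ₁ q - A φ₂ q)
          ≤ ENNReal.ofReal J * normL (fun q => φ₁ q - φ₂ q)) ∧
    (∃! φ, φ ∈ spaceB 𝒳 n T ∧ A φ = φ) := by
  -- nonnegativity of J at any point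
  have hJ0p : ∀ p : Dbar 𝒳 n T, 0 ≤ J := fun p =>
    le_trans (intervalIntegral.integral_nonneg (sub_nonneg.mpr p.property.1.2)
      (fun u _ => hw u p)) (hwJ p)
  -- key pointwise contraction estimate
  have key : ∀ φ₁ ∈ spaceB 𝒳 n T, ∀ φ₂ ∈ spaceB 𝒳 n T, ∀ p : Dbar 𝒳 n T,
      |A φ₁ p - A φ₂ p|
        ≤ J * (normL (fun q => φ₁ q - φ₂ q)).toReal * (1 + ∑ l, p.val.2.1 l) := by
    intro φ₁ h₁ φ₂ h₂ p
    set c := (normL (fun q => φ₁ q - φ₂ q)).toReal with hc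
    have hc0 : 0 ≤ c := ENNReal.toReal_nonneg
    set S := ∑ l, p.val.2.1 l with hSdef
    have hS0 : 0 ≤ S := Finset.sum_nonneg fun l _ => p.property.2.1 l
    have hTt : (0:ℝ) ≤ T - p.val.1 := sub_nonneg.mpr p.property.1.2
    refine (hbound φ₁ h₁ φ₂ h₂ p).trans ?_
    have hcont : Continuous fun v : ℝ => c * ((1 + S * Real.exp (r*v)) * Real.exp (-(r*v))) := by
      continuity
    have hInt1 : IntervalIntegrable
        (fun v => w v p * c * (1 + S * Real.exp (r*v)) * Real.exp (-(r*v)))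
        volume 0 (T - p.val.1) := by
      have := (hwint p).mul_continuousOn hcont.continuousOn
      simpa only [mul_assoc] using this
    have hInt2 : IntervalIntegrable (fun v => w v p * (c * (1 + S)))
        volume 0 (T - p.val.1) := (hwint p).mul_const _
    have hpt : ∀ v ∈ Set.Icc (0:ℝ) (T - p.val.1),
        w v p * c * (1 + S * Real.exp (r*v)) * Real.exp (-(r*v)) ≤ w v p * (c * (1 + S)) := by
      intro v hv
      have hv0 : 0 ≤ v := hv.1
      have he : (1 + S * Real.exp (r*v)) * Real.exp (-(r*v)) = Real.exp (-(r*v)) + S := by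
        rw [add_mul, one_mul, mul_assoc, ← Real.exp_add, add_neg_cancel, Real.exp_zero, mul_one]
      have he1 : Real.exp (-(r*v)) ≤ 1 :=
        Real.exp_le_one_iff.mpr (neg_nonpos.mpr (mul_nonneg hr hv0))
      calc w v p * c * (1 + S * Real.exp (r*v)) * Real.exp (-(r*v))
          = w v p * c * ((1 + S * Real.exp (r*v)) * Real.exp (-(r*v))) := by ring
        _ = w v p * c * (Real.exp (-(r*v)) + S) := by rw [he]
        _ ≤ w v p * c * (1 + S) := by
            apply mul_le_mul_of_nonneg_left (by linarith) (mul_nonneg (hw v p) hc0)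
        _ = w v p * (c * (1 + S)) := by ring
    calc (∫ v in (0:ℝ)..(T - p.val.1),
            w v p * c * (1 + S * Real.exp (r*v)) * Real.exp (-(r*v)))
        ≤ ∫ v in (0:ℝ)..(T - p.val.1), w v p * (c * (1 + S)) :=
          intervalIntegral.integral_mono_on hTt hInt1 hInt2 hpt
      _ = (∫ v in (0:ℝ)..(T - p.val.1), w v p) * (c * (1 + S)) := by
          rw [intervalIntegral.integral_mul_const]
      _ ≤ J * (c * (1 + S)) :=
          mul_le_mul_of_nonneg_right (hwJ p) (mul_nonneg hc0 (by linarith))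
      _ = J * c * (1 + S) := by ring
  -- the contraction inequality in normL
  have contr : ∀ φ₁ ∈ spaceB 𝒳 n T, ∀ φ₂ ∈ spaceB 𝒳 n T,
      normL (fun q => A φ₁ q - A φ₂ q)
        ≤ ENNReal.ofReal J * normL (fun q => φ₁ q - φ₂ q) := by
    intro φ₁ h₁ φ₂ h₂
    refine iSup_le fun p => ?_
    have hfin : normL (fun q => φ₁ q - φ₂ q) ≠ ⊤ :=
      ((aux_normL_sub_le φ₁ φ₂).trans_lt (ENNReal.add_lt_top.mpr ⟨h₁.2, h₂.2⟩)).ne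
    have hd : |A φ₁ p - A φ₂ p| / (1 + ∑ l, p.val.2.1 l)
        ≤ J * (normL (fun q => φ₁ q - φ₂ q)).toReal :=
      (div_le_iff₀ (aux_Spos p)).mpr (key φ₁ h₁ φ₂ h₂ p)
    calc ENNReal.ofReal (|A φ₁ p - A φ₂ p| / (1 + ∑ l, p.val.2.1 l))
        ≤ ENNReal.ofReal (J * (normL (fun q => φ₁ q - φ₂ q)).toReal) :=
          ENNReal.ofReal_le_ofReal hd
      _ = ENNReal.ofReal J * ENNReal.ofReal (normL (fun q => φ₁ q - φ₂ q)).toReal :=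
          ENNReal.ofReal_mul (hJ0p p)
      _ = ENNReal.ofReal J * normL (fun q => φ₁ q - φ₂ q) := by
          rw [ENNReal.ofReal_toReal hfin]
  refine ⟨contr, ?_⟩
  -- uniqueness helper: two fixed points agree
  have uniq : ∀ φ ∈ spaceB 𝒳 n T, A φ = φ → ∀ ψ ∈ spaceB 𝒳 n T, A ψ = ψ → ψ = φ := by
    intro φ hφ hφfix ψ hψ hψfix
    have hfin : normL (fun q => ψ q - φ q) ≠ ⊤ :=
      ((aux_normL_sub_le ψ φ).trans_lt (ENNReal.add_lt_top.mpr ⟨hψ.2, hφ.2⟩)).ne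
    have h1 : normL (fun q => ψ q - φ q) ≤ ENNReal.ofReal J * normL (fun q => ψ q - φ q) := by
      have := contr ψ hψ φ hφ
      rwa [hψfix, hφfix] at this
    have hz : normL (fun q => ψ q - φ q) = 0 := by
      by_contra hne
      have hJlt : ENNReal.ofReal J < 1 := ENNReal.ofReal_lt_one.mpr hJ
      have : ENNReal.ofReal J * normL (fun q => ψ q - φ q)
          < 1 * normL (fun q => ψ q - φ q) :=
        by rw [mul_comm _ (normL fun q => ψ q - φ q), mul_comm (1:ENNReal)]; exact ENNReal.mul_lt_mul_right hne hfin hJlt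
      rw [one_mul] at this
      exact absurd (h1.trans_lt this) (lt_irrefl _)
    funext p
    have := aux_normL_eq_zero hz p
    linarith [this]
  -- case split on emptiness of the domain
  rcases isEmpty_or_nonempty (Dbar 𝒳 n T) with hE | hNE
  · refine ⟨fun _ => 0, ⟨⟨measurable_const, ?_⟩, funext fun p => (hE.false p).elim⟩,
      fun ψ hψ => funext fun p => (hE.false p).elim⟩
    rw [normL, iSup_of_empty]
    exact bot_lt_top
  · -- nonempty case: Picard iteration from 0
    obtain ⟨p₀⟩ := hNE
    have hJ0 : 0 ≤ J := hJ0p p₀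
    have h1J : 0 < 1 - J := by linarith
    set φs : ℕ → Dbar 𝒳 n T → ℝ := fun k => A^[k] (fun _ => 0) with hφs
    have hzero : (fun _ : Dbar 𝒳 n T => (0:ℝ)) ∈ spaceB 𝒳 n T := by
      refine ⟨measurable_const, ?_⟩
      have : normL (fun _ : Dbar 𝒳 n T => (0:ℝ)) = 0 := by
        simp [normL]
      rw [this]; exact bot_lt_top
    have hmem : ∀ k, φs k ∈ spaceB 𝒳 n T := by
      intro k; induction k with
      | zero => simpa [hφs] using hzero
      | succ k ih =>
        have : φs (k+1) = A (φs k) := by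
          simp [hφs, Function.iterate_succ_apply']
        rw [this]; exact hA _ ih
    have hsucc : ∀ k, φs (k+1) = A (φs k) := by
      intro k; simp [hφs, Function.iterate_succ_apply']
    set g : ℕ → Dbar 𝒳 n T → ℝ := fun k p => φs (k+1) p - φs k p with hg
    set d : ℕ → ENNReal := fun k => normL (fun q => φs (k+1) q - φs k q) with hd
    have hdfin : ∀ k, d k ≠ ⊤ := fun k =>
      ((aux_normL_sub_le (φs (k+1)) (φs k)).trans_lt
        (ENNReal.add_lt_top.mpr ⟨(hmem (k+1)).2, (hmem k).2⟩)).ne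
    have hdgeo : ∀ k, d k ≤ (ENNReal.ofReal J)^k * d 0 := by
      intro k; induction k with
      | zero => simp
      | succ k ih =>
        have h1 : d (k+1) ≤ ENNReal.ofReal J * d k := by
          have := contr (φs (k+1)) (hmem (k+1)) (φs k) (hmem k)
          rw [← hsucc (k+1), ← hsucc k] at this
          exact this
        calc d (k+1) ≤ ENNReal.ofReal J * d k := h1
          _ ≤ ENNReal.ofReal J * ((ENNReal.ofReal J)^k * d 0) := by
              exact mul_le_mul_right ih _
          _ = (ENNReal.ofReal J)^(k+1) * d 0 := by ring
    set c0 : ℝ := (d 0).toReal with hc0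
    have hc00 : 0 ≤ c0 := ENNReal.toReal_nonneg
    have hdk : ∀ k, (d k).toReal ≤ c0 * J^k := by
      intro k
      have hne : (ENNReal.ofReal J)^k * d 0 ≠ ⊤ :=
        ENNReal.mul_ne_top (ENNReal.pow_ne_top ENNReal.ofReal_ne_top) (hdfin 0)
      have := ENNReal.toReal_mono hne (hdgeo k)
      rwa [ENNReal.toReal_mul, ENNReal.toReal_pow, ENNReal.toReal_ofReal hJ0,
        mul_comm] at this
    -- pointwise bound on increments
    have hgb : ∀ k p, |g k p| ≤ c0 * J^k * (1 + ∑ l, p.val.2.1 l) := by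
      intro k p
      refine (aux_abs_le (hdfin k) p).trans ?_
      exact mul_le_mul_of_nonneg_right (hdk k) (aux_Spos p).le
    have habs : ∀ p : Dbar 𝒳 n T, Summable fun k => |g k p| := by
      intro p
      refine Summable.of_nonneg_of_le (fun k => abs_nonneg _) (fun k => hgb k p) ?_
      have := (summable_geometric_of_lt_one hJ0 hJ).mul_left
        (c0 * (1 + ∑ l, p.val.2.1 l))
      refine this.congr fun k => by ring
    have hsum : ∀ p : Dbar 𝒳 n T, Summable fun k => g k p :=
      fun p => (habs p).of_abs
    set φF : Dbar 𝒳 n T → ℝ := fun p => ∑' k, g k p with hphiF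
    have hpart : ∀ m p, φs m p = ∑ k ∈ Finset.range m, g k p := by
      intro m p
      rw [Finset.sum_range_sub (fun k => φs k p) m]
      simp [hφs]
    -- tail bound
    have htail : ∀ m p, |φF p - φs m p| ≤ c0 / (1-J) * J^m * (1 + ∑ l, p.val.2.1 l) := by
      intro m p
      set S := ∑ l, p.val.2.1 l
      have hS1 : (0:ℝ) < 1 + S := aux_Spos p
      have heq : φF p - φs m p = ∑' k, g (k + m) p := by
        have h := Summable.sum_add_tsum_nat_add m (hsum p)
        have hφ : φF p = ∑' k, g k p := rfl
        rw [hpart m p, hφ]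
        linarith [h]
      rw [heq]
      have hshift : Summable fun k => |g (k + m) p| := (summable_nat_add_iff m).mpr (habs p)
      have hbd : Summable fun k : ℕ => c0 * (1+S) * J^m * J^k :=
        (summable_geometric_of_lt_one hJ0 hJ).mul_left _
      calc |∑' k, g (k + m) p| ≤ ∑' k, |g (k + m) p| := by
            simpa [Real.norm_eq_abs] using
              norm_tsum_le_tsum_norm (by simpa [Real.norm_eq_abs] using hshift :
                Summable fun k => ‖g (k + m) p‖)
        _ ≤ ∑' k : ℕ, c0 * (1+S) * J^m * J^k := by
            refine Summable.tsum_le_tsum (fun k => ?_) hshift hbd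
            calc |g (k + m) p| ≤ c0 * J^(k+m) * (1+S) := hgb (k+m) p
              _ = c0 * (1+S) * J^m * J^k := by rw [pow_add]; ring
        _ = c0 * (1+S) * J^m * (1-J)⁻¹ := by
            rw [tsum_mul_left, tsum_geometric_of_lt_one hJ0 hJ]
        _ = c0 / (1-J) * J^m * (1+S) := by field_simp
    -- φF is in spaceB
    have hmeasF : Measurable φF := by
      have htend : ∀ p, Filter.Tendsto (fun m => φs m p) Filter.atTop (nhds (φF p)) := by
        intro p
        have := (hsum p).hasSum.tendsto_sum_nat
        refine this.congr fun m => (hpart m p).symm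
      exact measurable_of_tendsto_metrizable (fun m => (hmem m).1)
        (tendsto_pi_nhds.mpr htend)
    have hnormF : normL φF < ⊤ := by
      refine lt_of_le_of_lt (aux_normL_le (C := c0 / (1-J)) fun p => ?_) ENNReal.ofReal_lt_top
      have := htail 0 p
      simpa [hφs] using this
    have hmemF : φF ∈ spaceB 𝒳 n T := ⟨hmeasF, hnormF⟩
    -- fixed point property
    have hfix : A φF = φF := by
      funext p
      set S := ∑ l, p.val.2.1 l with hSdef
      have hS1 : (0:ℝ) < 1 + S := aux_Spos p
      have hb : ∀ m : ℕ, |A φF p - φF p| ≤ 2 * (c0 / (1-J)) * (1+S) * J^m := by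
        intro m
        have hnm : normL (fun q => φF q - φs m q) ≤ ENNReal.ofReal (c0/(1-J) * J^m) :=
          aux_normL_le fun q => by
            have := htail m q
            calc |φF q - φs m q| ≤ c0 / (1-J) * J^m * (1 + ∑ l, q.val.2.1 l) := this
              _ = c0/(1-J) * J^m * (1 + ∑ l, q.val.2.1 l) := by ring
        have hnmr : (normL (fun q => φF q - φs m q)).toReal ≤ c0/(1-J) * J^m := by
          have h1 := ENNReal.toReal_mono ENNReal.ofReal_ne_top hnm
          rwa [ENNReal.toReal_ofReal (by positivity)] at h1
        have h2 : |A φF p - A (φs m) p| ≤ J * (c0/(1-J) * J^m) * (1+S) := by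
          refine (key φF hmemF (φs m) (hmem m) p).trans ?_
          have h3 : J * (normL (fun q => φF q - φs m q)).toReal ≤ J * (c0/(1-J) * J^m) :=
            mul_le_mul_of_nonneg_left hnmr hJ0
          exact mul_le_mul_of_nonneg_right h3 hS1.le
        have h4 : |φs (m+1) p - φF p| ≤ c0/(1-J) * J^(m+1) * (1+S) := by
          rw [abs_sub_comm]; exact htail (m+1) p
        have h5 : A (φs m) p = φs (m+1) p := by rw [hsucc m]
        have h4' : |A (φs m) p - φF p| ≤ c0/(1-J) * J^(m+1) * (1+S) := by
          rw [h5]; exact h4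
        calc |A φF p - φF p|
            ≤ |A φF p - A (φs m) p| + |A (φs m) p - φF p| := abs_sub_le _ _ _
          _ ≤ J * (c0/(1-J) * J^m) * (1+S) + c0/(1-J) * J^(m+1) * (1+S) :=
              add_le_add h2 h4'
          _ ≤ 2 * (c0 / (1-J)) * (1+S) * J^m := by
              have hJm : (0:ℝ) ≤ J^m := pow_nonneg hJ0 m
              have hc : (0:ℝ) ≤ c0/(1-J) := by positivity
              have hJle : J * J^m ≤ J^m := by nlinarith
              have hps : J^(m+1) = J * J^m := by rw [pow_succ]; ring
              rw [hps]
              nlinarith [mul_nonneg (mul_nonneg hc hS1.le) (sub_nonneg.mpr hJle)]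
      have htend0 : Filter.Tendsto (fun m : ℕ => 2 * (c0 / (1-J)) * (1+S) * J^m)
          Filter.atTop (nhds 0) := by
        have := tendsto_pow_atTop_nhds_zero_of_lt_one hJ0 hJ
        simpa using this.const_mul (2 * (c0 / (1-J)) * (1+S))
      have : |A φF p - φF p| ≤ 0 := ge_of_tendsto' htend0 hb
      have := abs_eq_zero.mp (le_antisymm this (abs_nonneg _))
      linarith
    exact ⟨φF, ⟨hmemF, hfix⟩, fun ψ hψ => uniq φF hmemF hfix ψ hψ.1 hψ.2⟩
end

section
/- Let P_l(y) := Ϝ_∞ˡ(y)/∏_m(1 − Fᵐ(yᵐ)) where Ϝ_∞ˡ(y) = ∫₀^∞ ∏_{m≠l}(1 − Fᵐ(s+yᵐ)) fˡ(s+yˡ) ds. Then along the diagonal direction, D_y P_l(y) = (Σ_r f_{τʳ}(0|yʳ)) P_l(y) − f_{τˡ}(0|yˡ), where f_{τʳ}(0|yʳ) := fʳ(yʳ)/(1 − Fʳ(yʳ)). -/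
open MeasureTheory

/-- For `P_l(y) = Ϝ_∞ˡ(y)/∏_m(1 − Fᵐ(yᵐ))` with
`Ϝ_∞ˡ(y) = ∫₀^∞ ∏_{m≠l}(1 − Fᵐ(s+yᵐ)) fˡ(s+yˡ) ds`, the derivative along the diagonal is
`(∑_r fʳ(yʳ)/(1−Fʳ(yʳ))) P_l(y) − fˡ(yˡ)/(1−Fˡ(yˡ))`. -/
theorem stmt_18 (n : ℕ) (l : Fin (n+1)) (F f : Fin (n+1) → ℝ → ℝ)
    (hderiv : ∀ m x, HasDerivAt (F m) (f m x) x)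
    (hcont : ∀ m, Continuous (f m))
    (hfnn : ∀ m x, 0 ≤ f m x)
    (hF0 : ∀ m x, 0 ≤ F m x) (hF1 : ∀ m x, F m x ≤ 1)
    (y : Fin (n+1) → ℝ) (hFlt : ∀ m, F m (y m) < 1) :
    HasDerivAt
      (fun ε =>
        (∫ s in Set.Ioi (0:ℝ),
            (∏ m ∈ Finset.univ.erase l, (1 - F m (s + (y m + ε)))) * f l (s + (y l + ε)))
          / ∏ m, (1 - F m (y m + ε)))
      ((∑ r, f r (y r) / (1 - F r (y r)))
          * ((∫ s in Set.Ioi (0:ℝ),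
                (∏ m ∈ Finset.univ.erase l, (1 - F m (s + y m))) * f l (s + y l))
              / ∏ m, (1 - F m (y m)))
        - f l (y l) / (1 - F l (y l))) 0 := by
  classical
  set h : ℝ → ℝ := fun s =>
    (∏ m ∈ Finset.univ.erase l, (1 - F m (s + y m))) * f l (s + y l) with hh
  have hFcont : ∀ m, Continuous (F m) := fun m =>
    continuous_iff_continuousAt.2 fun x => (hderiv m x).continuousAt
  have hcont_h : Continuous h := by
    apply Continuous.mul
    · exact continuous_finset_prod _ fun m _ =>
        continuous_const.sub ((hFcont m).comp (continuous_id.add continuous_const))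
    · exact (hcont l).comp (continuous_id.add continuous_const)
  have hmono : ∀ m, Monotone (F m) := fun m =>
    monotone_of_deriv_nonneg (fun x => (hderiv m x).differentiableAt)
      (fun x => by rw [(hderiv m x).deriv]; exact hfnn m x)
  have htend : ∀ m, Filter.Tendsto (F m) Filter.atTop (nhds (⨆ x, F m x)) := fun m =>
    tendsto_atTop_ciSup (hmono m) ⟨1, by rintro v ⟨x, rfl⟩; exact hF1 m x⟩
  -- integrability of s ↦ f l (s + y l) on Ioi a
  have hint_fl : ∀ a : ℝ, IntegrableOn (fun s => f l (s + y l)) (Set.Ioi a) := by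
    intro a
    refine integrableOn_Ioi_deriv_of_nonneg' (g := fun s => F l (s + y l))
      (l := ⨆ x, F l x) (fun x _ => ?_) (fun x _ => hfnn l _) ?_
    · have := (hderiv l (x + y l)).comp x ((hasDerivAt_id x).add_const (y l))
      rw [mul_one] at this
      exact this
    · exact (htend l).comp (Filter.tendsto_atTop_add_const_right _ (y l) Filter.tendsto_id)
  have hprod_mem : ∀ s : ℝ, 0 ≤ (∏ m ∈ Finset.univ.erase l, (1 - F m (s + y m))) ∧
      (∏ m ∈ Finset.univ.erase l, (1 - F m (s + y m))) ≤ 1 := by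
    intro s
    constructor
    · exact Finset.prod_nonneg fun m _ => sub_nonneg.2 (hF1 m _)
    · exact Finset.prod_le_one (fun m _ => sub_nonneg.2 (hF1 m _))
        (fun m _ => by linarith [hF0 m (s + y m)])
  have hint_h : ∀ a : ℝ, IntegrableOn h (Set.Ioi a) := by
    intro a
    refine (hint_fl a).mono' hcont_h.aestronglyMeasurable ?_
    filter_upwards with s
    have h1 := (hprod_mem s).1
    have h2 := (hprod_mem s).2
    have hnn : 0 ≤ h s := mul_nonneg h1 (hfnn l _)
    rw [Real.norm_eq_abs, abs_of_nonneg hnn]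
    calc h s ≤ 1 * f l (s + y l) :=
          mul_le_mul_of_nonneg_right h2 (hfnn l _)
      _ = f l (s + y l) := one_mul _
  -- translation identity
  have key : ∀ ε : ℝ, (∫ s in Set.Ioi (0:ℝ), h (s + ε)) = ∫ s in Set.Ioi ε, h s := by
    intro ε
    have hmp : Measure.map (fun x : ℝ => x + ε) volume = volume :=
      map_add_right_eq_self volume ε
    have : (∫ s in Set.Ioi ε, h s) = ∫ s in Set.Ioi ε, h s ∂(Measure.map (fun x : ℝ => x + ε) volume) := by
      rw [hmp]
    rw [this, setIntegral_map (g := fun x : ℝ => x + ε) measurableSet_Ioi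
      (by rw [hmp]; exact hcont_h.aestronglyMeasurable) (measurable_add_const ε).aemeasurable]
    have hpre : (fun x : ℝ => x + ε) ⁻¹' Set.Ioi ε = Set.Ioi 0 := by
      ext x; simp
    rw [hpre]
  -- splitting identity
  have hsplit : ∀ ε : ℝ, -1 ≤ ε →
      (∫ s in Set.Ioi ε, h s) = (∫ s in Set.Ioi (-1:ℝ), h s) - ∫ t in (-1:ℝ)..ε, h t := by
    intro ε hε
    rw [intervalIntegral.integral_of_le (by linarith), eq_sub_iff_add_eq, add_comm,
      ← setIntegral_union Set.Ioc_disjoint_Ioi_same measurableSet_Ioi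
        (hcont_h.integrableOn_Ioc) (hint_h ε), Set.Ioc_union_Ioi_eq_Ioi hε]
  -- derivative of the numerator
  have hFTC : HasDerivAt (fun ε => ∫ t in (-1:ℝ)..ε, h t) (h 0) 0 :=
    intervalIntegral.integral_hasDerivAt_right (hcont_h.intervalIntegrable _ _)
      (hcont_h.stronglyMeasurableAtFilter _ _) hcont_h.continuousAt
  have hG : HasDerivAt (fun ε => ∫ s in Set.Ioi ε, h s) (-(h 0)) 0 := by
    have h1 : HasDerivAt (fun ε => (∫ s in Set.Ioi (-1:ℝ), h s) - ∫ t in (-1:ℝ)..ε, h t)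
        (0 - h 0) 0 := (hasDerivAt_const _ _).sub hFTC
    refine HasDerivAt.congr_of_eventuallyEq (by simpa using h1) ?_
    filter_upwards [Ioi_mem_nhds (by norm_num : (-1:ℝ) < 0)] with ε hε
    exact hsplit ε (le_of_lt hε)
  -- derivative of the denominator factors
  have hDm : ∀ m, HasDerivAt (fun ε => 1 - F m (y m + ε)) (-(f m (y m + 0))) 0 := by
    intro m
    have h1 : HasDerivAt (fun ε : ℝ => F m (y m + ε)) (f m (y m + 0) * 1) 0 :=
      (hderiv m (y m + 0)).comp 0 ((hasDerivAt_id (0:ℝ)).const_add (y m))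
    simpa using h1.const_sub 1
  have hD : HasDerivAt (fun ε => ∏ m, (1 - F m (y m + ε)))
      (∑ r, (∏ j ∈ Finset.univ.erase r, (1 - F j (y j + 0))) • (-(f r (y r + 0)))) 0 :=
    HasDerivAt.fun_finsetProd (fun i _ => hDm i)
  have hPpos : ∀ m, 0 < 1 - F m (y m) := fun m => by linarith [hFlt m]
  have hD0ne : (∏ m, (1 - F m (y m + 0))) ≠ 0 := by
    simp only [add_zero]
    exact Finset.prod_ne_zero_iff.2 fun m _ => (hPpos m).ne'
  -- quotient rule
  have hQ := hG.fun_div hD hD0ne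
  -- rewrite the statement's function
  have funeq : (fun ε =>
        (∫ s in Set.Ioi (0:ℝ),
            (∏ m ∈ Finset.univ.erase l, (1 - F m (s + (y m + ε)))) * f l (s + (y l + ε)))
          / ∏ m, (1 - F m (y m + ε)))
      = fun ε => (∫ s in Set.Ioi ε, h s) / ∏ m, (1 - F m (y m + ε)) := by
    funext ε
    congr 1
    rw [← key ε]
    congr 1
    funext s
    simp only [hh, show ∀ c : ℝ, s + (c + ε) = s + ε + c from fun c => by ring]
  rw [funeq]
  convert hQ using 1
  · rfl
  · rfl
  -- final algebra
  simp only [add_zero, smul_eq_mul]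
  have hPne : ∀ m, (1 - F m (y m)) ≠ 0 := fun m => (hPpos m).ne'
  have hDne : (∏ m, (1 - F m (y m))) ≠ 0 := Finset.prod_ne_zero_iff.2 fun m _ => hPne m
  have hEr : ∀ r : Fin (n+1), (∏ j ∈ Finset.univ.erase r, (1 - F j (y j))) * (1 - F r (y r))
      = ∏ m, (1 - F m (y m)) := fun r => Finset.prod_erase_mul _ _ (Finset.mem_univ r)
  have hh0 : h 0 = (∏ j ∈ Finset.univ.erase l, (1 - F j (y j))) * f l (y l) := by
    simp [hh]
  have hsum : (∑ r, (∏ j ∈ Finset.univ.erase r, (1 - F j (y j))) * (-(f r (y r))))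
      = -((∏ m, (1 - F m (y m))) * ∑ r, f r (y r) / (1 - F r (y r))) := by
    rw [Finset.mul_sum, ← Finset.sum_neg_distrib]
    refine Finset.sum_congr rfl fun r _ => ?_
    rw [← hEr r, mul_assoc, mul_comm (1 - F r (y r)) (f r (y r) / (1 - F r (y r))),
      div_mul_cancel₀ _ (hPne r), mul_neg]
  have hEl : (∏ j ∈ Finset.univ.erase l, (1 - F j (y j)))
      = (∏ m, (1 - F m (y m))) / (1 - F l (y l)) := (eq_div_iff (hPne l)).2 (hEr l)
  rw [hh0, hsum, hEl]
  field_simp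
  ring
end

section
/- Define F_{τˡ|l}(T−t|y) := Ϝ_{T−t}ˡ(y)/Ϝ_∞ˡ(y) with Ϝ_vˡ(y) = ∫₀^v ∏_{m≠l}(1 − Fᵐ(s+yᵐ)) fˡ(s+yˡ) ds. Then along the joint direction (t,y) ↦ (t+ε, y+ε·1), D_{t,y} F_{τˡ|l}(T−t|y) = f_{τˡ|l}(0|y) · (F_{τˡ|l}(T−t|y) − 1), where f_{τˡ|l}(0|y) = Ϝ'₀ˡ(y)/Ϝ_∞ˡ(y) and Ϝ'_vˡ(y) = ∏_{m≠l}(1 − Fᵐ(v+yᵐ)) fˡ(v+yˡ). -/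
open MeasureTheory

lemma stmt19_aux (g : ℝ → ℝ) (hgc : Continuous g)
    (hden : 0 < ∫ u in Set.Ioi (0:ℝ), g u) (c : ℝ) :
    HasDerivAt (fun ε => (∫ u in ε..c, g u) / ∫ u in Set.Ioi ε, g u)
      ((g 0 / ∫ u in Set.Ioi (0:ℝ), g u)
        * ((∫ u in (0:ℝ)..c, g u) / (∫ u in Set.Ioi (0:ℝ), g u) - 1)) 0 := by
  have hint : IntegrableOn g (Set.Ioi (0:ℝ)) := by
    by_contra h
    rw [MeasureTheory.integral_undef h] at hden
    exact lt_irrefl 0 hden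
  have hsplit : ∀ ε : ℝ, (∫ u in Set.Ioi ε, g u)
      = (∫ u in Set.Ioi (0:ℝ), g u) - ∫ u in (0:ℝ)..ε, g u := by
    intro ε
    rcases le_or_gt 0 ε with h | h
    · have hu : Set.Ioi (0:ℝ) = Set.Ioc 0 ε ∪ Set.Ioi ε := (Set.Ioc_union_Ioi_eq_Ioi h).symm
      rw [intervalIntegral.integral_of_le h]
      have := MeasureTheory.setIntegral_union (Set.Ioc_disjoint_Ioi le_rfl)
        measurableSet_Ioi (hgc.intervalIntegrable 0 ε).1
        (hint.mono_set (Set.Ioi_subset_Ioi h)) (f := g) (μ := volume)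
      rw [← hu] at this
      rw [this]; ring
    · have hu : Set.Ioi ε = Set.Ioc ε 0 ∪ Set.Ioi 0 := (Set.Ioc_union_Ioi_eq_Ioi h.le).symm
      rw [intervalIntegral.integral_symm, intervalIntegral.integral_of_le h.le]
      have := MeasureTheory.setIntegral_union (Set.Ioc_disjoint_Ioi le_rfl)
        measurableSet_Ioi (hgc.intervalIntegrable ε 0).1 hint (f := g) (μ := volume)
      rw [← hu] at this
      rw [this]; ring
  have hden' : (∫ u in Set.Ioi (0:ℝ), g u) ≠ 0 := ne_of_gt hden
  have hN : HasDerivAt (fun ε => ∫ u in ε..c, g u) (-g 0) 0 :=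
    intervalIntegral.integral_hasDerivAt_left (hgc.intervalIntegrable 0 c)
      (hgc.stronglyMeasurableAtFilter _ _) hgc.continuousAt
  have hD : HasDerivAt (fun ε => ∫ u in Set.Ioi ε, g u) (-g 0) 0 := by
    have h1 : HasDerivAt (fun ε => ∫ u in (0:ℝ)..ε, g u) (g 0) 0 :=
      intervalIntegral.integral_hasDerivAt_right (hgc.intervalIntegrable 0 0)
        (hgc.stronglyMeasurableAtFilter _ _) hgc.continuousAt
    have h2 := h1.const_sub (∫ u in Set.Ioi (0:ℝ), g u)
    simp only [← hsplit] at h2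
    exact h2
  have : HasDerivAt (fun ε => (∫ u in ε..c, g u) / ∫ u in Set.Ioi ε, g u) _ 0 :=
    hN.div hD hden'
  rw [hsplit 0, intervalIntegral.integral_same, sub_zero] at this
  convert this using 1
  field_simp
  ring

/-- For `F_{τˡ|l}(T−t|y) = Ϝ_{T−t}ˡ(y)/Ϝ_∞ˡ(y)`, the derivative along the joint
direction `(t,y) ↦ (t+ε, y+ε·1)` is `f_{τˡ|l}(0|y) · (F_{τˡ|l}(T−t|y) − 1)`, where
`f_{τˡ|l}(0|y) = Ϝ'₀ˡ(y)/Ϝ_∞ˡ(y)`. -/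
theorem stmt_19 (n : ℕ) (l : Fin (n+1)) (F f : Fin (n+1) → ℝ → ℝ)
    (hderiv : ∀ m x, HasDerivAt (F m) (f m x) x)
    (hcont : ∀ m, Continuous (f m))
    (hfnn : ∀ m x, 0 ≤ f m x)
    (hF0 : ∀ m x, 0 ≤ F m x) (hF1 : ∀ m x, F m x ≤ 1)
    (y : Fin (n+1) → ℝ) (t T : ℝ) (htT : t ≤ T)
    (hden : 0 < ∫ s in Set.Ioi (0:ℝ),
        (∏ m ∈ Finset.univ.erase l, (1 - F m (s + y m))) * f l (s + y l)) :
    HasDerivAt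
      (fun ε =>
        (∫ s in (0:ℝ)..(T - (t + ε)),
            (∏ m ∈ Finset.univ.erase l, (1 - F m (s + (y m + ε)))) * f l (s + (y l + ε)))
          / ∫ s in Set.Ioi (0:ℝ),
              (∏ m ∈ Finset.univ.erase l, (1 - F m (s + (y m + ε)))) * f l (s + (y l + ε)))
      (((∏ m ∈ Finset.univ.erase l, (1 - F m (y m))) * f l (y l)
          / ∫ s in Set.Ioi (0:ℝ),
              (∏ m ∈ Finset.univ.erase l, (1 - F m (s + y m))) * f l (s + y l))
        * ((∫ s in (0:ℝ)..(T - t),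
              (∏ m ∈ Finset.univ.erase l, (1 - F m (s + y m))) * f l (s + y l))
            / (∫ s in Set.Ioi (0:ℝ),
                (∏ m ∈ Finset.univ.erase l, (1 - F m (s + y m))) * f l (s + y l))
          - 1)) 0 := by
  set g : ℝ → ℝ :=
    fun u => (∏ m ∈ Finset.univ.erase l, (1 - F m (u + y m))) * f l (u + y l) with hg
  have hFc : ∀ m, Continuous (F m) :=
    fun m => continuous_iff_continuousAt.mpr fun x => (hderiv m x).continuousAt
  have hgc : Continuous g :=
    (continuous_finset_prod _ fun m _ =>
        continuous_const.sub ((hFc m).comp (continuous_id.add continuous_const))).mul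
      ((hcont l).comp (continuous_id.add continuous_const))
  have hkey := stmt19_aux g hgc hden (T - t)
  have hfun : (fun ε =>
        (∫ s in (0:ℝ)..(T - (t + ε)),
            (∏ m ∈ Finset.univ.erase l, (1 - F m (s + (y m + ε)))) * f l (s + (y l + ε)))
          / ∫ s in Set.Ioi (0:ℝ),
              (∏ m ∈ Finset.univ.erase l, (1 - F m (s + (y m + ε)))) * f l (s + (y l + ε)))
      = fun ε => (∫ u in ε..(T - t), g u) / ∫ u in Set.Ioi ε, g u := by
    funext ε
    have harg : (fun s : ℝ =>
        (∏ m ∈ Finset.univ.erase l, (1 - F m (s + (y m + ε)))) * f l (s + (y l + ε)))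
        = fun s => g (s + ε) := by
      funext s
      simp only [hg]
      congr 1
      · exact Finset.prod_congr rfl fun m _ => by rw [show s + (y m + ε) = s + ε + y m by ring]
      · rw [show s + (y l + ε) = s + ε + y l by ring]
    have hnum : (∫ s in (0:ℝ)..(T - (t + ε)),
        (∏ m ∈ Finset.univ.erase l, (1 - F m (s + (y m + ε)))) * f l (s + (y l + ε)))
        = ∫ u in ε..(T - t), g u := by
      rw [harg, intervalIntegral.integral_comp_add_right g ε]
      congr 1 <;> ring
    have hden2 : (∫ s in Set.Ioi (0:ℝ),
        (∏ m ∈ Finset.univ.erase l, (1 - F m (s + (y m + ε)))) * f l (s + (y l + ε)))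
        = ∫ u in Set.Ioi ε, g u := by
      rw [harg]
      have h := (measurePreserving_add_right volume ε).setIntegral_preimage_emb
        (MeasurableEquiv.addRight ε).measurableEmbedding g (Set.Ioi ε)
      rw [Set.preimage_add_const_Ioi, sub_self] at h
      exact h
    rw [hnum, hden2]
  rw [hfun]
  convert hkey using 2
  simp [hg]
end
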